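/- Let p be a prime and f, g ∈ KS_{p,2}. Then the pointwise product f·g, defined by (f·g)(s) = f(s)·g(s), also belongs to KS_{p,2}; in particular Δ^n (f·g)(s) ∈ p^n ℤ_p for all integers n ≥ 0 and all s ∈ ℤ_p. -/

import Mathlib

open Finset

/-- The forward difference operator `Δ_h^n` with increment `h ≥ 1`:
`Δ_h^n f(s) = ∑_{ν=0}^n (n choose ν)·(−1)^(n−ν)·f(s+νh)`. -/
noncomputable def deltaH (p : ℕ) [Fact p.Prime] (h : ℕ) (f : ℤ_[p] → ℤ_[p]) (n : ℕ)
    (s : ℤ_[p]) : ℤ_[p] :=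
  ∑ ν ∈ Finset.range (n + 1),
    (n.choose ν : ℤ_[p]) * (-1) ^ (n - ν) * f (s + (ν : ℤ_[p]) * (h : ℤ_[p]))

/-- `f ∈ KS_{p,2}`: `f` is continuous and satisfies the Kummer type congruences
`Δ^n f(s) ∈ p^n ℤ_p` for all integers `n ≥ 0` and all `s ∈ ℤ_p`. -/
def KS2 (p : ℕ) [Fact p.Prime] (f : ℤ_[p] → ℤ_[p]) : Prop :=
  Continuous f ∧ ∀ (n : ℕ) (s : ℤ_[p]), (p : ℤ_[p]) ^ n ∣ deltaH p 1 f n s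

open fwdDiff in
lemma deltaH_eq_fwdDiff (p : ℕ) [Fact p.Prime] (f : ℤ_[p] → ℤ_[p]) (n : ℕ) (s : ℤ_[p]) :
    deltaH p 1 f n s = (fwdDiff (1 : ℤ_[p]))^[n] f s := by
  rw [fwdDiff_iter_eq_sum_shift, deltaH]
  refine Finset.sum_congr rfl fun k _ => ?_
  rw [zsmul_eq_mul]
  push_cast
  ring_nf

open fwdDiff in
lemma key (p : ℕ) [Fact p.Prime] (n : ℕ) :
    ∀ (a b : ℕ) (f g : ℤ_[p] → ℤ_[p]),
      (∀ (m : ℕ) (s : ℤ_[p]), (p : ℤ_[p]) ^ (m + a) ∣ (fwdDiff (1 : ℤ_[p]))^[m] f s) →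
      (∀ (m : ℕ) (s : ℤ_[p]), (p : ℤ_[p]) ^ (m + b) ∣ (fwdDiff (1 : ℤ_[p]))^[m] g s) →
      ∀ s : ℤ_[p], (p : ℤ_[p]) ^ (n + a + b) ∣ (fwdDiff (1 : ℤ_[p]))^[n] (f * g) s := by
  induction n with
  | zero =>
    intro a b f g hf hg s
    simpa [pow_add] using mul_dvd_mul (by simpa using hf 0 s) (by simpa using hg 0 s)
  | succ n IH =>
    intro a b f g hf hg s
    have hfd : ∀ (m : ℕ) (s : ℤ_[p]),
        (p : ℤ_[p]) ^ (m + (a + 1)) ∣ (fwdDiff (1 : ℤ_[p]))^[m] (fwdDiff (1 : ℤ_[p]) f) s := by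
      intro m s
      have := hf (m + 1) s
      rwa [Function.iterate_succ_apply, show m + 1 + a = m + (a + 1) by ring] at this
    have hgd : ∀ (m : ℕ) (s : ℤ_[p]),
        (p : ℤ_[p]) ^ (m + (b + 1)) ∣ (fwdDiff (1 : ℤ_[p]))^[m] (fwdDiff (1 : ℤ_[p]) g) s := by
      intro m s
      have := hg (m + 1) s
      rwa [Function.iterate_succ_apply, show m + 1 + b = m + (b + 1) by ring] at this
    have hLeib : fwdDiff (1 : ℤ_[p]) (f * g)
        = fwdDiff (1 : ℤ_[p]) f * g + f * fwdDiff (1 : ℤ_[p]) g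
          + fwdDiff (1 : ℤ_[p]) f * fwdDiff (1 : ℤ_[p]) g := by
      have := fwdDiff_smul (1 : ℤ_[p]) f g
      simpa [smul_eq_mul, Pi.smul_apply'] using this
    rw [Function.iterate_succ_apply, hLeib, fwdDiff_iter_add, fwdDiff_iter_add]
    simp only [Pi.add_apply]
    have h1 := IH (a + 1) b _ _ hfd hg s
    have h2 := IH a (b + 1) _ _ hf hgd s
    have h3 := IH (a + 1) (b + 1) _ _ hfd hgd s
    have e1 : n + (a + 1) + b = n + 1 + a + b := by ring
    have e2 : n + a + (b + 1) = n + 1 + a + b := by ring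
    rw [e1] at h1; rw [e2] at h2
    have h3' : (p : ℤ_[p]) ^ (n + 1 + a + b)
        ∣ (fwdDiff (1 : ℤ_[p]))^[n] (fwdDiff (1 : ℤ_[p]) f * fwdDiff (1 : ℤ_[p]) g) s :=
      dvd_trans (pow_dvd_pow _ (by omega)) h3
    exact dvd_add (dvd_add h1 h2) h3'

theorem stmt15 (p : ℕ) [Fact p.Prime] (f g : ℤ_[p] → ℤ_[p]) (hf : KS2 p f) (hg : KS2 p g) :
    KS2 p fun s => f s * g s := by
  refine ⟨hf.1.mul hg.1, fun n s => ?_⟩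
  rw [deltaH_eq_fwdDiff]
  have hf' : ∀ (m : ℕ) (s : ℤ_[p]), (p : ℤ_[p]) ^ (m + 0) ∣ (fwdDiff (1 : ℤ_[p]))^[m] f s := by
    intro m s
    rw [← deltaH_eq_fwdDiff, Nat.add_zero]
    exact hf.2 m s
  have hg' : ∀ (m : ℕ) (s : ℤ_[p]), (p : ℤ_[p]) ^ (m + 0) ∣ (fwdDiff (1 : ℤ_[p]))^[m] g s := by
    intro m s
    rw [← deltaH_eq_fwdDiff, Nat.add_zero]
    exact hg.2 m s
  have := key p n 0 0 f g hf' hg' s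
  simpa [Pi.mul_def] using this
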